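/- Fix an integer K ≥ 2; for each user k ∈ {2,…,K} let G_k be an m×m complex Hermitian positive semidefinite matrix (the received covariance H_{k1}S_kH_{k1}ᴴ of user k's signal at user 1's receiver) and r_k ≥ 0 a real rate. If 𝒰 and 𝒰' are both decodable user sets for user 1, then 𝒰 ∪ 𝒰' is also a decodable user set for user 1. -/

import Mathlib

open Matrix
open scoped ComplexOrder

section Helpers

variable {n : ℕ}

open scoped MatrixOrder in
noncomputable def Matrix.PosSemidef.sqrt {A : Matrix (Fin n) (Fin n) ℂ} (_ : A.PosSemidef) :
    Matrix (Fin n) (Fin n) ℂ := CFC.sqrt A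

open scoped MatrixOrder in
lemma Matrix.PosSemidef.sqrt_mul_self {A : Matrix (Fin n) (Fin n) ℂ} (hA : A.PosSemidef) :
    hA.sqrt * hA.sqrt = A := CFC.sqrt_mul_sqrt_self A hA.nonneg

open scoped MatrixOrder in
lemma Matrix.PosSemidef.posSemidef_sqrt {A : Matrix (Fin n) (Fin n) ℂ} (hA : A.PosSemidef) :
    hA.sqrt.PosSemidef := Matrix.nonneg_iff_posSemidef.mp (CFC.sqrt_nonneg A)

lemma det_one_add_eq {A : Matrix (Fin n) (Fin n) ℂ} (hA : A.PosSemidef) :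
    (1 + A).det = ∏ i, (1 + (hA.1.eigenvalues i : ℂ)) := by
  set U : Matrix (Fin n) (Fin n) ℂ := (hA.1.eigenvectorUnitary : Matrix (Fin n) (Fin n) ℂ) with hU
  have hUU : U * star U = 1 := Matrix.mem_unitaryGroup_iff.mp hA.1.eigenvectorUnitary.2
  have hUU' : star U * U = 1 := Matrix.mem_unitaryGroup_iff'.mp hA.1.eigenvectorUnitary.2
  set D : Matrix (Fin n) (Fin n) ℂ := Matrix.diagonal (RCLike.ofReal ∘ hA.1.eigenvalues) with hD
  have h1 : 1 + A = U * (1 + D) * star U := by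
    rw [Matrix.mul_add, Matrix.add_mul, Matrix.mul_one, hUU]
    congr 1
    exact hA.1.spectral_theorem
  rw [h1, det_mul, det_mul, mul_comm, ← mul_assoc, ← det_mul, hUU', det_one, one_mul, hD,
    ← Matrix.diagonal_one, Matrix.diagonal_add, Matrix.det_diagonal]
  simp

lemma one_le_det_one_add {A : Matrix (Fin n) (Fin n) ℂ} (hA : A.PosSemidef) :
    1 ≤ (1 + A).det := by
  rw [det_one_add_eq hA]
  have : ∀ i ∈ Finset.univ (α := Fin n), (1:ℂ) ≤ 1 + (hA.1.eigenvalues i : ℂ) := by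
    intro i _
    simpa using Complex.zero_le_real.mpr (hA.eigenvalues_nonneg i)
  calc (1:ℂ) = ∏ _i : Fin n, 1 := by simp
  _ ≤ ∏ i, (1 + (hA.1.eigenvalues i : ℂ)) :=
      Finset.prod_le_prod (fun i _ => zero_le_one) this

lemma psd_conj {E : Matrix (Fin n) (Fin n) ℂ} (hE : E.PosSemidef)
    {B : Matrix (Fin n) (Fin n) ℂ} (hB : B.IsHermitian) : (B * E * B).PosSemidef := by
  have := hE.mul_mul_conjTranspose_same B
  rwa [hB.eq] at this

-- det (P + E) = det P * det (1 + y P⁻¹ y),  y = sqrt E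
lemma factorB {P E : Matrix (Fin n) (Fin n) ℂ} (hP : P.PosDef) (hE : E.PosSemidef) :
    (P + E).det = P.det * (1 + hE.sqrt * P⁻¹ * hE.sqrt).det := by
  have hinv : P * P⁻¹ = 1 := Matrix.mul_nonsing_inv P (isUnit_iff_isUnit_det P |>.mp hP.isUnit)
  have h1 : P + E = P * (1 + P⁻¹ * E) := by
    rw [Matrix.mul_add, Matrix.mul_one, ← Matrix.mul_assoc, hinv, Matrix.one_mul]
  have h2 : P⁻¹ * E = (P⁻¹ * hE.sqrt) * hE.sqrt := by
    rw [Matrix.mul_assoc, hE.sqrt_mul_self]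
  rw [h1, det_mul, h2, Matrix.det_one_add_mul_comm, ← Matrix.mul_assoc]

lemma factorB_psd {P E : Matrix (Fin n) (Fin n) ℂ} (hP : P.PosDef) (hE : E.PosSemidef) :
    (hE.sqrt * P⁻¹ * hE.sqrt).PosSemidef :=
  psd_conj hP.inv.posSemidef hE.posSemidef_sqrt.1

-- det (P + E) = det P * det (1 + s E s),  s = sqrt (P⁻¹)
lemma factorA {P E : Matrix (Fin n) (Fin n) ℂ} (hP : P.PosDef) (hE : E.PosSemidef) :
    (P + E).det = P.det * (1 + hP.inv.posSemidef.sqrt * E * hP.inv.posSemidef.sqrt).det := by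
  have hinv : P * P⁻¹ = 1 := Matrix.mul_nonsing_inv P (isUnit_iff_isUnit_det P |>.mp hP.isUnit)
  have h1 : P + E = P * (1 + P⁻¹ * E) := by
    rw [Matrix.mul_add, Matrix.mul_one, ← Matrix.mul_assoc, hinv, Matrix.one_mul]
  have h2 : P⁻¹ * E = hP.inv.posSemidef.sqrt * (hP.inv.posSemidef.sqrt * E) := by
    rw [← Matrix.mul_assoc, hP.inv.posSemidef.sqrt_mul_self]
  rw [h1, det_mul, h2, Matrix.det_one_add_mul_comm]

lemma factorA_psd {P E : Matrix (Fin n) (Fin n) ℂ} (hP : P.PosDef) (hE : E.PosSemidef) :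
    (hP.inv.posSemidef.sqrt * E * hP.inv.posSemidef.sqrt).PosSemidef :=
  psd_conj hE hP.inv.posSemidef.posSemidef_sqrt.1

lemma one_add_posDef {A : Matrix (Fin n) (Fin n) ℂ} (hA : A.PosSemidef) : (1 + A).PosDef :=
  Matrix.PosDef.add_posSemidef Matrix.PosDef.one hA

lemma det_mono {Z E : Matrix (Fin n) (Fin n) ℂ} (hZ : Z.PosSemidef) (hE : E.PosSemidef) :
    (1 + Z).det ≤ (1 + Z + E).det := by
  have hP : (1 + Z).PosDef := one_add_posDef hZ
  rw [factorB hP hE]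
  exact le_mul_of_one_le_right hP.det_pos.le (one_le_det_one_add (factorB_psd hP hE))

lemma det_subadd {X Y : Matrix (Fin n) (Fin n) ℂ} (hX : X.PosSemidef) (hY : Y.PosSemidef) :
    (1 + (X + Y)).det ≤ (1 + X).det * (1 + Y).det := by
  have hQ : (1 + X).PosDef := one_add_posDef hX
  set Q : Matrix (Fin n) (Fin n) ℂ := 1 + X with hQdef
  set y : Matrix (Fin n) (Fin n) ℂ := hY.sqrt with hy
  have hyy : y * y = Y := hY.sqrt_mul_self
  have hyH : y.IsHermitian := hY.posSemidef_sqrt.1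
  have hQinv : Q * Q⁻¹ = 1 := Matrix.mul_nonsing_inv Q (isUnit_iff_isUnit_det Q |>.mp hQ.isUnit)
  have hQinv' : Q⁻¹ * Q = 1 := Matrix.nonsing_inv_mul Q (isUnit_iff_isUnit_det Q |>.mp hQ.isUnit)
  set F : Matrix (Fin n) (Fin n) ℂ := y * Q⁻¹ * y with hF
  have hFpsd : F.PosSemidef := factorB_psd hQ hY
  -- the complement 1 - Q⁻¹ is PSD
  have hXX : (X + X * X).PosSemidef := hX.add (by simpa [hX.1.eq] using Matrix.posSemidef_self_mul_conjTranspose X)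
  have hid : Q⁻¹ * (X + X * X) * Q⁻¹ = 1 - Q⁻¹ := by
    have h1 : X + X * X = X * Q := by rw [hQdef, Matrix.mul_add, Matrix.mul_one]
    rw [h1, ← Matrix.mul_assoc, Matrix.mul_assoc (Q⁻¹ * X), hQinv, Matrix.mul_one]
    have h2 : X = Q - 1 := by rw [hQdef]; abel
    rw [h2, Matrix.mul_sub, hQinv', Matrix.mul_one]
  have hW : (y * (1 - Q⁻¹) * y).PosSemidef := by
    rw [← hid]; exact psd_conj (hid ▸ psd_conj hXX hQ.inv.isHermitian) hyH
  have hYF : Y = F + y * (1 - Q⁻¹) * y := by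
    rw [hF, Matrix.mul_sub, Matrix.sub_mul, Matrix.mul_one]
    rw [hyy]
    abel
  have hmain : (Q + Y).det = Q.det * (1 + F).det := factorB hQ hY
  have hle : (1 + F).det ≤ (1 + Y).det := by
    have := det_mono hFpsd hW
    rwa [add_assoc, ← hYF] at this
  calc (1 + (X + Y)).det = (Q + Y).det := by rw [hQdef, add_assoc]
    _ = Q.det * (1 + F).det := hmain
    _ ≤ Q.det * (1 + Y).det := by
        exact mul_le_mul_of_nonneg_left hle hQ.det_pos.le

lemma one_add_posDef' {A : Matrix (Fin n) (Fin n) ℂ} (hA : A.PosSemidef) : (1 + A).PosDef :=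
  Matrix.PosDef.add_posSemidef Matrix.PosDef.one hA

lemma key_ineq {A B D : Matrix (Fin n) (Fin n) ℂ}
    (hA : A.PosSemidef) (hB : B.PosSemidef) (hD : D.PosSemidef) :
    Real.log ((1 + (A + D) + B).det.re) - Real.log ((1 + (A + D)).det.re) ≤
      Real.log ((1 + A + B).det.re) - Real.log ((1 + A).det.re) := by
  have hP : (1 + A).PosDef := one_add_posDef' hA
  set s : Matrix (Fin n) (Fin n) ℂ := hP.inv.posSemidef.sqrt with hs
  set X : Matrix (Fin n) (Fin n) ℂ := s * B * s with hX
  set Y : Matrix (Fin n) (Fin n) ℂ := s * D * s with hY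
  have hXpsd : X.PosSemidef := factorA_psd hP hB
  have hYpsd : Y.PosSemidef := factorA_psd hP hD
  have e1 : (1 + A + B).det = (1 + A).det * (1 + X).det := factorA hP hB
  have e2 : (1 + (A + D)).det = (1 + A).det * (1 + Y).det := by
    rw [← add_assoc]; exact factorA hP hD
  have e3 : (1 + (A + D) + B).det = (1 + A).det * (1 + (Y + X)).det := by
    have h0 : 1 + (A + D) + B = (1 + A) + (D + B) := by abel
    have h1 : s * (D + B) * s = Y + X := by
      rw [Matrix.mul_add, Matrix.add_mul]
    rw [h0, factorA hP (hD.add hB), h1]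
  -- complex inequality
  have hp0 : (0:ℂ) ≤ (1 + A).det := hP.det_pos.le
  have hsub : (1 + (Y + X)).det ≤ (1 + Y).det * (1 + X).det := det_subadd hYpsd hXpsd
  have hC : (1 + (A + D) + B).det * (1 + A).det ≤
      (1 + A + B).det * (1 + (A + D)).det := by
    rw [e1, e2, e3]
    calc (1 + A).det * (1 + (Y + X)).det * (1 + A).det
        ≤ (1 + A).det * ((1 + Y).det * (1 + X).det) * (1 + A).det :=
          mul_le_mul_of_nonneg_right (mul_le_mul_of_nonneg_left hsub hp0) hp0
      _ = (1 + A).det * (1 + X).det * ((1 + A).det * (1 + Y).det) := by ring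
  -- positivity of the four determinants
  have hd1 : (0:ℂ) < (1 + A + B).det := by
    rw [add_assoc]; exact (one_add_posDef' (hA.add hB)).det_pos
  have hd2 : (0:ℂ) < (1 + (A + D)).det := (one_add_posDef' (hA.add hD)).det_pos
  have hd3 : (0:ℂ) < (1 + (A + D) + B).det := by
    have h0 : 1 + (A + D) + B = 1 + (A + D + B) := by abel
    rw [h0]; exact (one_add_posDef' ((hA.add hD).add hB)).det_pos
  have hd0 : (0:ℂ) < (1 + A).det := hP.det_pos
  -- extract real parts
  obtain ⟨hr1, hi1⟩ := Complex.pos_iff.mp hd1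
  obtain ⟨hr2, hi2⟩ := Complex.pos_iff.mp hd2
  obtain ⟨hr3, hi3⟩ := Complex.pos_iff.mp hd3
  obtain ⟨hr0, hi0⟩ := Complex.pos_iff.mp hd0
  have hR : (1 + (A + D) + B).det.re * (1 + A).det.re ≤
      (1 + A + B).det.re * (1 + (A + D)).det.re := by
    have := (Complex.le_def.mp hC).1
    rwa [Complex.mul_re, Complex.mul_re, ← hi3, ← hi1, ← hi2, ← hi0, mul_zero,
      sub_zero, sub_zero] at this
  have hlog := Real.log_le_log (by positivity) hR
  rw [Real.log_mul hr3.ne' hr0.ne', Real.log_mul hr1.ne' hr2.ne'] at hlog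
  linarith

end Helpers

/-- Definition 4.1: a subset 𝒰 ⊆ {2,…,K} is a decodable user set for user 1 if
for every nonempty 𝒥 ⊆ 𝒰 the sum rate of 𝒥 does not exceed the corresponding
MAC constraint, treating the users outside 𝒰 as colored Gaussian noise. -/
def IsDecodableUserSet {m : ℕ} (K : ℕ) (G : ℕ → Matrix (Fin m) (Fin m) ℂ)
    (r : ℕ → ℝ) (U : Finset ℕ) : Prop :=
  U ⊆ Finset.Icc 2 K ∧
  ∀ J ⊆ U, J.Nonempty →
    ∑ i ∈ J, r i ≤
      Real.log ((1 + (∑ k ∈ Finset.Icc 2 K \ U, G k) + ∑ i ∈ J, G i).det.re) -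
        Real.log ((1 + ∑ k ∈ Finset.Icc 2 K \ U, G k).det.re)

/-- the union of two decodable user sets for user 1 is again a
decodable user set for user 1. -/
theorem union_decodable {m : ℕ} (K : ℕ) (hK : 2 ≤ K)
    (G : ℕ → Matrix (Fin m) (Fin m) ℂ) (r : ℕ → ℝ)
    (hG : ∀ k ∈ Finset.Icc 2 K, (G k).PosSemidef) (hr : ∀ k, 0 ≤ r k)
    (U U' : Finset ℕ)
    (hU : IsDecodableUserSet K G r U) (hU' : IsDecodableUserSet K G r U') :
    IsDecodableUserSet K G r (U ∪ U') := by
  obtain ⟨hU1, hU2⟩ := hU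
  obtain ⟨hU'1, hU'2⟩ := hU'
  refine ⟨Finset.union_subset hU1 hU'1, ?_⟩
  intro J hJ hJne
  set T := Finset.Icc 2 K with hT
  set V := U ∪ U' with hV
  have hpsd : ∀ S : Finset ℕ, S ⊆ T → (∑ k ∈ S, G k).PosSemidef := fun S hS =>
    Finset.sum_induction _ _ (fun a b ha hb => ha.add hb) Matrix.PosSemidef.zero
      (fun k hk => hG k (hS hk))
  have hJT : J ⊆ T := hJ.trans (Finset.union_subset hU1 hU'1)
  set J1 := J ∩ U with hJ1
  set J2 := J \ U with hJ2
  have hJ1U : J1 ⊆ U := Finset.inter_subset_right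
  have hJ2U' : J2 ⊆ U' := by
    intro x hx
    rcases Finset.mem_union.mp (hJ (Finset.mem_sdiff.mp hx).1) with h | h
    · exact absurd h (Finset.mem_sdiff.mp hx).2
    · exact h
  have hNV : (∑ k ∈ T \ V, G k).PosSemidef := hpsd _ Finset.sdiff_subset
  have hS1 : (∑ k ∈ J1, G k).PosSemidef := hpsd _ (Finset.inter_subset_left.trans hJT)
  have hS2 : (∑ k ∈ J2, G k).PosSemidef := hpsd _ (Finset.sdiff_subset.trans hJT)
  -- Claim 1
  have hTVU' : T \ V ⊆ T \ U' :=
    Finset.sdiff_subset_sdiff (le_refl T) Finset.subset_union_right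
  have hsplit' : ∑ k ∈ (T \ U') \ (T \ V), G k + ∑ k ∈ T \ V, G k = ∑ k ∈ T \ U', G k :=
    Finset.sum_sdiff hTVU'
  have claim1 : ∑ i ∈ J2, r i ≤
      Real.log ((1 + (∑ k ∈ T \ V, G k) + ∑ i ∈ J2, G i).det.re)
        - Real.log ((1 + ∑ k ∈ T \ V, G k).det.re) := by
    rcases Finset.eq_empty_or_nonempty J2 with h | h
    · simp [h]
    · have hbound := hU'2 J2 hJ2U' h
      have hkey := key_ineq hNV hS2 (hpsd ((T \ U') \ (T \ V)) (Finset.sdiff_subset.trans Finset.sdiff_subset))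
      have hND : (∑ k ∈ T \ V, G k) + ∑ k ∈ (T \ U') \ (T \ V), G k
          = ∑ k ∈ T \ U', G k := by rw [add_comm]; exact hsplit'
      rw [hND] at hkey
      exact hbound.trans hkey
  -- Claim 2
  have hsub2 : (T \ V) ∪ J2 ⊆ T \ U := by
    apply Finset.union_subset
    · exact Finset.sdiff_subset_sdiff (le_refl T) Finset.subset_union_left
    · intro x hx
      exact Finset.mem_sdiff.mpr ⟨hJT (Finset.mem_sdiff.mp hx).1, (Finset.mem_sdiff.mp hx).2⟩
  have hdisj : Disjoint (T \ V) J2 := by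
    rw [Finset.disjoint_left]
    intro x hx hx2
    exact (Finset.mem_sdiff.mp hx).2 (hJ (Finset.mem_sdiff.mp hx2).1)
  have hsplit2 : ∑ k ∈ (T \ U) \ ((T \ V) ∪ J2), G k + ∑ k ∈ (T \ V) ∪ J2, G k
      = ∑ k ∈ T \ U, G k := Finset.sum_sdiff hsub2
  have hunion : ∑ k ∈ (T \ V) ∪ J2, G k = ∑ k ∈ T \ V, G k + ∑ k ∈ J2, G k :=
    Finset.sum_union hdisj
  have claim2 : ∑ i ∈ J1, r i ≤
      Real.log ((1 + ((∑ k ∈ T \ V, G k) + ∑ i ∈ J2, G i) + ∑ i ∈ J1, G i).det.re)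
        - Real.log ((1 + ((∑ k ∈ T \ V, G k) + ∑ i ∈ J2, G i)).det.re) := by
    rcases Finset.eq_empty_or_nonempty J1 with h | h
    · simp [h]
    · have hbound := hU2 J1 hJ1U h
      have hkey := key_ineq (hNV.add hS2) hS1
        (hpsd ((T \ U) \ ((T \ V) ∪ J2)) (Finset.sdiff_subset.trans Finset.sdiff_subset))
      have hND : ((∑ k ∈ T \ V, G k) + ∑ i ∈ J2, G i)
            + ∑ k ∈ (T \ U) \ ((T \ V) ∪ J2), G k = ∑ k ∈ T \ U, G k := by
        rw [← hunion, add_comm]; exact hsplit2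
      rw [hND] at hkey
      exact hbound.trans hkey
  -- combine
  have hrsplit : ∑ i ∈ J, r i = ∑ i ∈ J1, r i + ∑ i ∈ J2, r i :=
    (Finset.sum_inter_add_sum_sdiff J U r).symm
  have hGsplit : ∑ i ∈ J, G i = ∑ i ∈ J1, G i + ∑ i ∈ J2, G i :=
    (Finset.sum_inter_add_sum_sdiff J U G).symm
  rw [← add_assoc] at claim2
  have hfinal : 1 + (∑ k ∈ T \ V, G k) + ∑ i ∈ J, G i
      = 1 + (∑ k ∈ T \ V, G k) + ∑ i ∈ J2, G i + ∑ i ∈ J1, G i := by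
    rw [hGsplit]; abel
  rw [hrsplit, hfinal]
  linarith [claim1, claim2]
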